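/- arXiv:2205.14790 — 4 statements merged into one kernel-verified Lean document; each statement's English description precedes it below -/
import Mathlib

section
/- Let f : 2^[n] → ℝ be a submodular function on a ground set of n ≥ 2 elements, and let ι_a, ι_b be two distinct elements. For y ∈ [0,1]^n with y_{ι_a} + y_{ι_b} ≤ 1, let D(y) be the distribution over subsets where each element i ∉ {ι_a, ι_b} is included independently with probability y_i, and ι_a, ι_b are included with marginal probabilities y_{ι_a}, y_{ι_b} respectively but mutually exclusively (never both, independent of the other elements). Let I(y) be the fully independent inclusion distribution with the same marginals. Then E_{S∼D(y)}[f(S)] ≥ E_{S∼I(y)}[f(S)]. -/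
/-- Mutually-exclusive vs independent sampling for submodular functions:
the expectation of a submodular `f` under the distribution `D(y)` where `ιa, ιb` are
mutually exclusive (with marginals `y ιa, y ιb`) and all other elements independent,
dominates the expectation under the fully independent distribution `I(y)`. -/
theorem stmt_0 {n : ℕ} (hn : 2 ≤ n) (f : Finset (Fin n) → ℝ)
    (hsub : ∀ S T : Finset (Fin n), f (S ∪ T) + f (S ∩ T) ≤ f S + f T)
    (ιa ιb : Fin n) (hab : ιa ≠ ιb)
    (y : Fin n → ℝ) (hy : ∀ i, y i ∈ Set.Icc (0:ℝ) 1) (hsum : y ιa + y ιb ≤ 1) :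
    -- E_{S ∼ I(y)} [f S]
    (∑ S ∈ (Finset.univ : Finset (Fin n)).powerset,
        (∏ i ∈ S, y i) * (∏ i ∈ Finset.univ \ S, (1 - y i)) * f S)
    ≤
    -- E_{S ∼ D(y)} [f S]
    ∑ S' ∈ ((Finset.univ : Finset (Fin n)) \ {ιa, ιb}).powerset,
        (∏ i ∈ S', y i) * (∏ i ∈ (Finset.univ \ {ιa, ιb}) \ S', (1 - y i)) *
          ((1 - y ιa - y ιb) * f S' + y ιa * f (insert ιa S') + y ιb * f (insert ιb S')) := by
  classical
  set u : Finset (Fin n) := Finset.univ \ {ιa, ιb} with hu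
  have hbu : ιb ∉ u := by simp [hu]
  have hau : ιa ∉ insert ιb u := by simp [hu, hab]
  have huniv : insert ιa (insert ιb u) = (Finset.univ : Finset (Fin n)) := by
    ext i; simp [hu]; tauto
  rw [← huniv, Finset.sum_powerset_insert hau, Finset.sum_powerset_insert hbu,
    Finset.sum_powerset_insert hbu, ← Finset.sum_add_distrib, ← Finset.sum_add_distrib,
    ← Finset.sum_add_distrib]
  apply Finset.sum_le_sum
  intro S' hS'
  have hS'u : S' ⊆ u := Finset.mem_powerset.mp hS'
  have haS : ιa ∉ S' := fun h => by have := hS'u h; simp [hu] at this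
  have hbS : ιb ∉ S' := fun h => by have := hS'u h; simp [hu] at this
  have h1 : (Finset.univ : Finset (Fin n)) \ S' = insert ιa (insert ιb (u \ S')) := by
    ext i; rcases eq_or_ne i ιa with rfl | hia <;> rcases eq_or_ne i ιb with rfl | hib <;> simp_all [hu] <;> first | tauto | exact fun _ => Finset.mem_sdiff.mpr ⟨Finset.mem_univ i, by simp [hia, hib]⟩
  have h2 : (Finset.univ : Finset (Fin n)) \ insert ιb S' = insert ιa (u \ S') := by
    ext i; rcases eq_or_ne i ιa with rfl | hia <;> rcases eq_or_ne i ιb with rfl | hib <;> simp_all [hu] <;> first | tauto | exact fun _ => Finset.mem_sdiff.mpr ⟨Finset.mem_univ i, by simp [hia, hib]⟩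
  have h3 : (Finset.univ : Finset (Fin n)) \ insert ιa S' = insert ιb (u \ S') := by
    ext i; rcases eq_or_ne i ιa with rfl | hia <;> rcases eq_or_ne i ιb with rfl | hib <;> simp_all [hu] <;> first | tauto | exact fun _ => Finset.mem_sdiff.mpr ⟨Finset.mem_univ i, by simp [hia, hib]⟩
  have h4 : (Finset.univ : Finset (Fin n)) \ insert ιa (insert ιb S') = u \ S' := by
    ext i; rcases eq_or_ne i ιa with rfl | hia <;> rcases eq_or_ne i ιb with rfl | hib <;> simp_all [hu] <;> first | tauto | exact fun _ => Finset.mem_sdiff.mpr ⟨Finset.mem_univ i, by simp [hia, hib]⟩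
  have haus : ιa ∉ u \ S' := by simp [hu]
  have hbus : ιb ∉ u \ S' := by simp [hu]
  have haus' : ιa ∉ insert ιb (u \ S') := by simp [hu, hab]
  have haS2 : ιa ∉ insert ιb S' := by simp [hab, haS]
  rw [huniv, h1, h2, h3, h4]
  simp only [Finset.prod_insert haus', Finset.prod_insert hbus, Finset.prod_insert haus,
    Finset.prod_insert hbS, Finset.prod_insert haS, Finset.prod_insert haS2]
  have hP : (0:ℝ) ≤ ∏ i ∈ S', y i := Finset.prod_nonneg fun i _ => (hy i).1
  have hQ : (0:ℝ) ≤ ∏ i ∈ u \ S', (1 - y i) := Finset.prod_nonneg fun i _ => by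
    have := (hy i).2; linarith
  have hya := (hy ιa).1
  have hyb := (hy ιb).1
  have hmod := hsub (insert ιa S') (insert ιb S')
  have hun : insert ιa S' ∪ insert ιb S' = insert ιa (insert ιb S') := by
    ext i; simp; tauto
  have hin : insert ιa S' ∩ insert ιb S' = S' := by
    ext i; simp only [Finset.mem_inter, Finset.mem_insert]
    constructor
    · rintro ⟨rfl | h1', h2'⟩
      · rcases h2' with h2' | h2'
        · exact absurd h2' hab
        · exact h2'
      · exact h1'
    · exact fun h => ⟨Or.inr h, Or.inr h⟩
  rw [hun, hin] at hmod
  have key : (0:ℝ) ≤ (∏ i ∈ S', y i) * (∏ i ∈ u \ S', (1 - y i)) * y ιa * y ιb *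
      (f (insert ιa S') + f (insert ιb S') - f S' - f (insert ιa (insert ιb S'))) := by
    apply mul_nonneg
    apply mul_nonneg
    apply mul_nonneg
    exact mul_nonneg hP hQ
    exact hya
    exact hyb
    linarith
  nlinarith [key]
end

section
/- Let w ∈ [0,∞)^n, let k ≤ n be a positive integer, and let f_{w,k}(S) = max{ Σ_{i∈I} w_i : I ⊆ S, |I| ≤ k } be the weighted rank function of the rank-k uniform matroid. If y ∈ [0,1]^n satisfies Σ_i y_i ≤ k, then the concave closure satisfies f⁺_{w,k}(y) ≥ Σ_i w_i · y_i. -/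
/-- The weighted rank function of the rank-`k` uniform matroid with weights `w`:
`fwk w k S = max { ∑_{i ∈ I} w i : I ⊆ S, |I| ≤ k }`. -/
noncomputable def fwk {n : ℕ} (w : Fin n → ℝ) (k : ℕ) (S : Finset (Fin n)) : ℝ :=
  sSup {r : ℝ | ∃ I : Finset (Fin n), I ⊆ S ∧ I.card ≤ k ∧ r = ∑ i ∈ I, w i}

/-- The concave closure of a set function `f` at `y`: the supremum of `E_{S∼D}[f S]`
over distributions `D` on `2^[n]` with marginals `y`. -/
noncomputable def concClosure {n : ℕ} (f : Finset (Fin n) → ℝ) (y : Fin n → ℝ) : ℝ :=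
  sSup {r : ℝ | ∃ α : Finset (Fin n) → ℝ,
    (∀ S, 0 ≤ α S) ∧ (∑ S : Finset (Fin n), α S) = 1 ∧
    (∀ i, (∑ S : Finset (Fin n), if i ∈ S then α S else 0) = y i) ∧
    r = ∑ S : Finset (Fin n), α S * f S}

open Finset

/-- `y` is a convex combination of indicators of sets of size at most `k`. -/
def good {n : ℕ} (k : ℕ) (y : Fin n → ℝ) : Prop :=
  ∃ α : Finset (Fin n) → ℝ,
    (∀ S, 0 ≤ α S) ∧ (∑ S : Finset (Fin n), α S) = 1 ∧
    (∀ i, (∑ S : Finset (Fin n), if i ∈ S then α S else 0) = y i) ∧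
    (∀ S, α S ≠ 0 → S.card ≤ k)

lemma good_integral {n k : ℕ} (y : Fin n → ℝ) (h01 : ∀ i, y i = 0 ∨ y i = 1)
    (hsum : ∑ i, y i ≤ (k:ℝ)) : good k y := by
  classical
  set S₀ : Finset (Fin n) := Finset.univ.filter (fun i => y i = 1) with hS₀
  refine ⟨fun S => if S = S₀ then 1 else 0, ?_, ?_, ?_, ?_⟩
  · intro S; simp only []; split_ifs <;> norm_num
  · simp
  · intro i
    have : ∀ S : Finset (Fin n),
        (if i ∈ S then (if S = S₀ then (1:ℝ) else 0) else 0)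
          = (if S = S₀ then (if i ∈ S₀ then (1:ℝ) else 0) else 0) := by
      intro S; split_ifs with h1 h2 h2 <;> simp_all
    rw [Finset.sum_congr rfl fun S _ => this S, Finset.sum_ite_eq' Finset.univ S₀]
    simp only [Finset.mem_univ, if_true]
    rcases h01 i with h | h <;> simp [hS₀, h]
  · intro S hS
    have hSeq : S = S₀ := by by_contra h; simp [h] at hS
    subst hSeq
    have hcard : (S₀.card : ℝ) ≤ (k : ℝ) := by
      calc (S₀.card : ℝ) = ∑ i, y i := by
            rw [Finset.card_filter]
            push_cast
            refine Finset.sum_congr rfl fun i _ => ?_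
            rcases h01 i with h | h <;> simp [h]
        _ ≤ (k:ℝ) := hsum
    exact_mod_cast hcard

lemma good_convex {n k : ℕ} {y y₁ y₂ : Fin n → ℝ} {t : ℝ} (ht0 : 0 ≤ t) (ht1 : t ≤ 1)
    (hy : ∀ i, y i = t * y₁ i + (1 - t) * y₂ i)
    (h1 : good k y₁) (h2 : good k y₂) : good k y := by
  obtain ⟨a, ha0, ha1, ham, hac⟩ := h1
  obtain ⟨b, hb0, hb1, hbm, hbc⟩ := h2
  refine ⟨fun S => t * a S + (1 - t) * b S, ?_, ?_, ?_, ?_⟩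
  · intro S
    have := ha0 S; have := hb0 S
    have h1t : 0 ≤ 1 - t := by linarith
    positivity
  · rw [Finset.sum_add_distrib, ← Finset.mul_sum, ← Finset.mul_sum, ha1, hb1]; ring
  · intro i
    rw [hy i, ← ham i, ← hbm i, Finset.mul_sum, Finset.mul_sum, ← Finset.sum_add_distrib]
    refine Finset.sum_congr rfl fun S _ => ?_
    split_ifs <;> ring
  · intro S hS
    by_cases h : a S ≠ 0
    · exact hac S h
    · push_neg at h
      refine hbc S fun hb => hS ?_
      simp [h, hb]

lemma good_of {n : ℕ} (k : ℕ) : ∀ y : Fin n → ℝ, (∀ i, 0 ≤ y i) → (∀ i, y i ≤ 1) →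
    (∑ i, y i) ≤ (k:ℝ) → good k y := by
  classical
  suffices H : ∀ m : ℕ, ∀ y : Fin n → ℝ,
      2 * (Finset.univ.filter fun i => y i ≠ 0 ∧ y i ≠ 1).card
        + (if (∑ i, y i) < (k:ℝ) then 1 else 0) ≤ m →
      (∀ i, 0 ≤ y i) → (∀ i, y i ≤ 1) → (∑ i, y i) ≤ (k:ℝ) → good k y by
    intro y h0 h1 hs
    exact H _ y le_rfl h0 h1 hs
  intro m
  induction m with
  | zero =>
    intro y hm h0 h1 hs
    have hc : (Finset.univ.filter fun i => y i ≠ 0 ∧ y i ≠ 1).card = 0 := by omega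
    have h01 : ∀ i, y i = 0 ∨ y i = 1 := by
      intro i
      by_contra h
      push_neg at h
      have : i ∈ Finset.univ.filter fun i => y i ≠ 0 ∧ y i ≠ 1 := by
        simp [h.1, h.2]
      rw [Finset.card_eq_zero] at hc
      simp [hc] at this
    exact good_integral y h01 hs
  | succ m ih =>
    intro y hm h0 h1 hs
    by_cases hint : ∀ i, y i = 0 ∨ y i = 1
    · exact good_integral y hint hs
    · push_neg at hint
      obtain ⟨i, hi0, hi1⟩ := hint
      have hi0' : 0 < y i := lt_of_le_of_ne (h0 i) (Ne.symm hi0)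
      have hi1' : y i < 1 := lt_of_le_of_ne (h1 i) hi1
      set F := (Finset.univ.filter fun j => y j ≠ 0 ∧ y j ≠ 1) with hF
      have hiF : i ∈ F := by simp [hF, hi0, hi1]
      have hFc : 1 ≤ F.card := Finset.card_pos.2 ⟨i, hiF⟩
      by_cases hlt : (∑ j, y j) < (k:ℝ)
      · -- Case A: slack in the sum constraint
        set s : ℝ := min (1 - y i) ((k:ℝ) - ∑ j, y j) with hsdef
        have hspos : 0 < s := lt_min (by linarith) (by linarith)
        have hs1 : s ≤ 1 - y i := min_le_left _ _
        have hs2 : s ≤ (k:ℝ) - ∑ j, y j := min_le_right _ _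
        set ylo : Fin n → ℝ := fun l => if l = i then 0 else y l with hylo
        set yhi : Fin n → ℝ := fun l => if l = i then y i + s else y l with hyhi
        set t : ℝ := s / (y i + s) with htdef
        have hyispos : 0 < y i + s := by linarith
        have ht0 : 0 ≤ t := div_nonneg (le_of_lt hspos) (le_of_lt hyispos)
        have ht1 : t ≤ 1 := by
          rw [htdef, div_le_one hyispos]; linarith
        have hconv : ∀ l, y l = t * ylo l + (1 - t) * yhi l := by
          intro l
          by_cases h : l = i
          · rw [h]
            simp only [hylo, hyhi, if_pos rfl, htdef]
            field_simp
            ring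
          · simp only [hylo, hyhi, if_neg h]; ring
        have hsumlo : ∑ j, ylo j = (∑ j, y j) - y i := by
          have : ∀ j, ylo j = y j - (if j = i then y i else 0) := by
            intro j; by_cases h : j = i <;> simp [hylo, h]
          rw [Finset.sum_congr rfl fun j _ => this j, Finset.sum_sub_distrib,
            Finset.sum_ite_eq' Finset.univ i (fun _ => y i)]
          simp
        have hsumhi : ∑ j, yhi j = (∑ j, y j) + s := by
          have : ∀ j, yhi j = y j + (if j = i then s else 0) := by
            intro j; by_cases h : j = i <;> simp [hyhi, h]
          rw [Finset.sum_congr rfl fun j _ => this j, Finset.sum_add_distrib,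
            Finset.sum_ite_eq' Finset.univ i (fun _ => s)]
          simp
        have hFlo : (Finset.univ.filter fun j => ylo j ≠ 0 ∧ ylo j ≠ 1) ⊆ F.erase i := by
          intro j hj
          simp only [Finset.mem_filter, Finset.mem_univ, true_and] at hj
          by_cases h : j = i
          · exfalso; apply hj.1; simp [hylo, h]
          · refine Finset.mem_erase.2 ⟨h, ?_⟩
            simp only [hylo, if_neg h] at hj
            simp [hF, hj.1, hj.2]
        have hglo : good k ylo := by
          refine ih ylo ?_ ?_ ?_ ?_
          · have h1' : (Finset.univ.filter fun j => ylo j ≠ 0 ∧ ylo j ≠ 1).card ≤ F.card - 1 := by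
              calc _ ≤ (F.erase i).card := Finset.card_le_card hFlo
                _ = F.card - 1 := Finset.card_erase_of_mem hiF
            have h2 : 2 * F.card + 1 ≤ m + 1 := by
              have := hm; simp only [if_pos hlt] at this; omega
            have : (if (∑ j, ylo j) < (k:ℝ) then 1 else 0) ≤ 1 := by split_ifs <;> omega
            omega
          · intro l; by_cases h : l = i <;> simp [hylo, h, h0 l]
          · intro l; by_cases h : l = i <;> simp [hylo, h, h1 l]
          · rw [hsumlo]; linarith
        have hghi : good k yhi := by
          refine ih yhi ?_ ?_ ?_ ?_
          · rcases le_or_gt (1 - y i) ((k:ℝ) - ∑ j, y j) with hcase | hcase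
            · have hseq : s = 1 - y i := min_eq_left hcase
              have hFhi : (Finset.univ.filter fun j => yhi j ≠ 0 ∧ yhi j ≠ 1) ⊆ F.erase i := by
                intro j hj
                simp only [Finset.mem_filter, Finset.mem_univ, true_and] at hj
                by_cases h : j = i
                · exfalso; apply hj.2
                  rw [show yhi j = y i + s by simp [hyhi, h], hseq]; ring
                · refine Finset.mem_erase.2 ⟨h, ?_⟩
                  simp only [hyhi, if_neg h] at hj
                  simp [hF, hj.1, hj.2]
              have h1' : (Finset.univ.filter fun j => yhi j ≠ 0 ∧ yhi j ≠ 1).card ≤ F.card - 1 := by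
                calc _ ≤ (F.erase i).card := Finset.card_le_card hFhi
                  _ = F.card - 1 := Finset.card_erase_of_mem hiF
              have h2 : 2 * F.card + 1 ≤ m + 1 := by
                have := hm; simp only [if_pos hlt] at this; omega
              have : (if (∑ j, yhi j) < (k:ℝ) then 1 else 0) ≤ 1 := by split_ifs <;> omega
              omega
            · have hseq : s = (k:ℝ) - ∑ j, y j := min_eq_right (le_of_lt hcase)
              have hsum' : ∑ j, yhi j = (k:ℝ) := by rw [hsumhi, hseq]; ring
              have hFhi : (Finset.univ.filter fun j => yhi j ≠ 0 ∧ yhi j ≠ 1) ⊆ F := by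
                intro j hj
                simp only [Finset.mem_filter, Finset.mem_univ, true_and] at hj
                by_cases h : j = i
                · rw [h]; exact hiF
                · simp only [hyhi, if_neg h] at hj
                  simp [hF, hj.1, hj.2]
              have h1' : (Finset.univ.filter fun j => yhi j ≠ 0 ∧ yhi j ≠ 1).card ≤ F.card :=
                Finset.card_le_card hFhi
              have h2 : 2 * F.card + 1 ≤ m + 1 := by
                have := hm; simp only [if_pos hlt] at this; omega
              have h3 : (if (∑ j, yhi j) < (k:ℝ) then 1 else 0) = 0 := by
                rw [hsum']; simp
              omega
          · intro l
            by_cases h : l = i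
            · simp only [hyhi, if_pos h]; linarith
            · simp [hyhi, h, h0 l]
          · intro l
            by_cases h : l = i
            · simp only [hyhi, if_pos h]; linarith
            · simp [hyhi, h, h1 l]
          · rw [hsumhi]; linarith
        exact good_convex ht0 ht1 hconv hglo hghi
      · -- Case B: ∑ y = k
        have hsum_eq : ∑ j, y j = (k:ℝ) := le_antisymm hs (not_lt.1 hlt)
        have hexj : ∃ j, j ≠ i ∧ y j ≠ 0 ∧ y j ≠ 1 := by
          by_contra h
          push_neg at h
          have h01 : ∀ j ∈ Finset.univ.erase i, y j = 0 ∨ y j = 1 := by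
            intro j hj
            rcases eq_or_ne (y j) 0 with h' | h'
            · exact Or.inl h'
            · exact Or.inr (h j (Finset.mem_erase.1 hj).1 h')
          set c := ((Finset.univ.erase i).filter fun j => y j = 1).card with hc
          have hrest : ∑ j ∈ Finset.univ.erase i, y j = (c : ℝ) := by
            rw [hc, Finset.card_filter]
            push_cast
            refine Finset.sum_congr rfl fun j hj => ?_
            rcases h01 j hj with h' | h' <;> simp [h']
          have hsplit : y i + ∑ j ∈ Finset.univ.erase i, y j = (k:ℝ) := by
            rw [← hsum_eq, Finset.add_sum_erase]
            exact Finset.mem_univ i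
          rw [hrest] at hsplit
          have hc1 : (c:ℝ) < (k:ℝ) := by linarith
          have hc2 : (k:ℝ) < (c:ℝ) + 1 := by linarith
          have hc1' : c < k := by exact_mod_cast hc1
          have hc2' : k < c + 1 := by exact_mod_cast hc2
          omega
        obtain ⟨j, hji, hj0, hj1⟩ := hexj
        have hij : i ≠ j := Ne.symm hji
        have hj0' : 0 < y j := lt_of_le_of_ne (h0 j) (Ne.symm hj0)
        have hj1' : y j < 1 := lt_of_le_of_ne (h1 j) hj1
        have hjF : j ∈ F := by simp [hF, hj0, hj1]
        set δ : ℝ := min (1 - y i) (y j) with hδdef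
        set δ' : ℝ := min (1 - y j) (y i) with hδ'def
        have hδpos : 0 < δ := lt_min (by linarith) hj0'
        have hδ'pos : 0 < δ' := lt_min (by linarith) hi0'
        have hδa : δ ≤ 1 - y i := min_le_left _ _
        have hδb : δ ≤ y j := min_le_right _ _
        have hδ'a : δ' ≤ 1 - y j := min_le_left _ _
        have hδ'b : δ' ≤ y i := min_le_right _ _
        set y₁ : Fin n → ℝ := fun l =>
          y l + (if l = i then δ else 0) - (if l = j then δ else 0) with hy₁
        set y₂ : Fin n → ℝ := fun l =>
          y l - (if l = i then δ' else 0) + (if l = j then δ' else 0) with hy₂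
        have hy₁i : y₁ i = y i + δ := by simp [hy₁, hij]
        have hy₁j : y₁ j = y j - δ := by simp [hy₁, hji]
        have hy₁o : ∀ l, l ≠ i → l ≠ j → y₁ l = y l := by
          intro l h1' h2'; simp [hy₁, h1', h2']
        have hy₂i : y₂ i = y i - δ' := by simp [hy₂, hij]
        have hy₂j : y₂ j = y j + δ' := by simp [hy₂, hji]
        have hy₂o : ∀ l, l ≠ i → l ≠ j → y₂ l = y l := by
          intro l h1' h2'; simp [hy₂, h1', h2']
        set t : ℝ := δ' / (δ + δ') with htdef
        have hδδ' : 0 < δ + δ' := by linarith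
        have hne : δ + δ' ≠ 0 := ne_of_gt hδδ'
        have ht0 : 0 ≤ t := div_nonneg (le_of_lt hδ'pos) (le_of_lt hδδ')
        have ht1 : t ≤ 1 := by rw [htdef, div_le_one hδδ']; linarith
        have hconv : ∀ l, y l = t * y₁ l + (1 - t) * y₂ l := by
          intro l
          by_cases a : l = i
          · rw [a, hy₁i, hy₂i, htdef]
            field_simp
            ring
          · by_cases b : l = j
            · rw [b, hy₁j, hy₂j, htdef]
              field_simp
              ring
            · rw [hy₁o l a b, hy₂o l a b]; ring
        have hsum₁ : ∑ l, y₁ l = ∑ l, y l := by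
          simp only [hy₁]
          rw [Finset.sum_sub_distrib, Finset.sum_add_distrib,
            Finset.sum_ite_eq' Finset.univ i (fun _ => δ),
            Finset.sum_ite_eq' Finset.univ j (fun _ => δ)]
          simp
        have hsum₂ : ∑ l, y₂ l = ∑ l, y l := by
          simp only [hy₂]
          rw [Finset.sum_add_distrib, Finset.sum_sub_distrib,
            Finset.sum_ite_eq' Finset.univ i (fun _ => δ'),
            Finset.sum_ite_eq' Finset.univ j (fun _ => δ')]
          simp
        have hmeas : 2 * F.card ≤ m + 1 := by
          have := hm
          rw [hsum_eq] at this
          simp only [lt_irrefl, if_false] at this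
          omega
        have hg₁ : good k y₁ := by
          refine ih y₁ ?_ ?_ ?_ ?_
          · have hsub : (Finset.univ.filter fun l => y₁ l ≠ 0 ∧ y₁ l ≠ 1) ⊆ F.erase i ∨
                (Finset.univ.filter fun l => y₁ l ≠ 0 ∧ y₁ l ≠ 1) ⊆ F.erase j := by
              rcases le_or_gt (1 - y i) (y j) with hcase | hcase
              · left
                have hδeq : δ = 1 - y i := min_eq_left hcase
                intro l hl
                simp only [Finset.mem_filter, Finset.mem_univ, true_and] at hl
                by_cases a : l = i
                · exact absurd (by rw [a, hy₁i, hδeq]; ring) hl.2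
                · refine Finset.mem_erase.2 ⟨a, ?_⟩
                  by_cases b : l = j
                  · rw [b]; exact hjF
                  · rw [hy₁o l a b] at hl
                    simp [hF, hl.1, hl.2]
              · right
                have hδeq : δ = y j := min_eq_right (le_of_lt hcase)
                intro l hl
                simp only [Finset.mem_filter, Finset.mem_univ, true_and] at hl
                by_cases b : l = j
                · exact absurd (by rw [b, hy₁j, hδeq]; ring) hl.1
                · refine Finset.mem_erase.2 ⟨b, ?_⟩
                  by_cases a : l = i
                  · rw [a]; exact hiF
                  · rw [hy₁o l a b] at hl
                    simp [hF, hl.1, hl.2]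
            have hcard : (Finset.univ.filter fun l => y₁ l ≠ 0 ∧ y₁ l ≠ 1).card ≤ F.card - 1 := by
              rcases hsub with h | h
              · calc _ ≤ (F.erase i).card := Finset.card_le_card h
                  _ = F.card - 1 := Finset.card_erase_of_mem hiF
              · calc _ ≤ (F.erase j).card := Finset.card_le_card h
                  _ = F.card - 1 := Finset.card_erase_of_mem hjF
            have : (if (∑ l, y₁ l) < (k:ℝ) then 1 else 0) ≤ 1 := by split_ifs <;> omega
            omega
          · intro l
            by_cases a : l = i
            · rw [a, hy₁i]; linarith
            · by_cases b : l = j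
              · rw [b, hy₁j]; linarith
              · rw [hy₁o l a b]; exact h0 l
          · intro l
            by_cases a : l = i
            · rw [a, hy₁i]; linarith
            · by_cases b : l = j
              · rw [b, hy₁j]; linarith
              · rw [hy₁o l a b]; exact h1 l
          · rw [hsum₁]; exact hs
        have hg₂ : good k y₂ := by
          refine ih y₂ ?_ ?_ ?_ ?_
          · have hsub : (Finset.univ.filter fun l => y₂ l ≠ 0 ∧ y₂ l ≠ 1) ⊆ F.erase j ∨
                (Finset.univ.filter fun l => y₂ l ≠ 0 ∧ y₂ l ≠ 1) ⊆ F.erase i := by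
              rcases le_or_gt (1 - y j) (y i) with hcase | hcase
              · left
                have hδeq : δ' = 1 - y j := min_eq_left hcase
                intro l hl
                simp only [Finset.mem_filter, Finset.mem_univ, true_and] at hl
                by_cases b : l = j
                · exact absurd (by rw [b, hy₂j, hδeq]; ring) hl.2
                · refine Finset.mem_erase.2 ⟨b, ?_⟩
                  by_cases a : l = i
                  · rw [a]; exact hiF
                  · rw [hy₂o l a b] at hl
                    simp [hF, hl.1, hl.2]
              · right
                have hδeq : δ' = y i := min_eq_right (le_of_lt hcase)
                intro l hl
                simp only [Finset.mem_filter, Finset.mem_univ, true_and] at hl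
                by_cases a : l = i
                · exact absurd (by rw [a, hy₂i, hδeq]; ring) hl.1
                · refine Finset.mem_erase.2 ⟨a, ?_⟩
                  by_cases b : l = j
                  · rw [b]; exact hjF
                  · rw [hy₂o l a b] at hl
                    simp [hF, hl.1, hl.2]
            have hcard : (Finset.univ.filter fun l => y₂ l ≠ 0 ∧ y₂ l ≠ 1).card ≤ F.card - 1 := by
              rcases hsub with h | h
              · calc _ ≤ (F.erase j).card := Finset.card_le_card h
                  _ = F.card - 1 := Finset.card_erase_of_mem hjF
              · calc _ ≤ (F.erase i).card := Finset.card_le_card h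
                  _ = F.card - 1 := Finset.card_erase_of_mem hiF
            have : (if (∑ l, y₂ l) < (k:ℝ) then 1 else 0) ≤ 1 := by split_ifs <;> omega
            omega
          · intro l
            by_cases a : l = i
            · rw [a, hy₂i]; linarith
            · by_cases b : l = j
              · rw [b, hy₂j]; linarith
              · rw [hy₂o l a b]; exact h0 l
          · intro l
            by_cases a : l = i
            · rw [a, hy₂i]; linarith
            · by_cases b : l = j
              · rw [b, hy₂j]; linarith
              · rw [hy₂o l a b]; exact h1 l
          · rw [hsum₂]; exact hs
        exact good_convex ht0 ht1 hconv hg₁ hg₂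

lemma fwk_bdd {n : ℕ} (w : Fin n → ℝ) (hw : ∀ i, 0 ≤ w i) (k : ℕ) (S : Finset (Fin n)) :
    BddAbove {r : ℝ | ∃ I : Finset (Fin n), I ⊆ S ∧ I.card ≤ k ∧ r = ∑ i ∈ I, w i} := by
  refine ⟨∑ i, w i, ?_⟩
  rintro r ⟨I, -, -, rfl⟩
  exact Finset.sum_le_sum_of_subset_of_nonneg (Finset.subset_univ I) (fun i _ _ => hw i)

lemma fwk_ge {n : ℕ} (w : Fin n → ℝ) (hw : ∀ i, 0 ≤ w i) (k : ℕ) (S : Finset (Fin n))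
    (hS : S.card ≤ k) : ∑ i ∈ S, w i ≤ fwk w k S :=
  le_csSup (fwk_bdd w hw k S) ⟨S, Finset.Subset.refl S, hS, rfl⟩

lemma fwk_le {n : ℕ} (w : Fin n → ℝ) (hw : ∀ i, 0 ≤ w i) (k : ℕ) (S : Finset (Fin n)) :
    fwk w k S ≤ ∑ i, w i := by
  refine csSup_le ⟨0, ∅, by simp⟩ ?_
  rintro r ⟨I, -, -, rfl⟩
  exact Finset.sum_le_sum_of_subset_of_nonneg (Finset.subset_univ I) (fun i _ _ => hw i)


/-- If `y ∈ [0,1]^n` satisfies `∑ i, y i ≤ k`, then the concave closure of the weighted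
rank function of the rank-`k` uniform matroid satisfies `f⁺_{w,k}(y) ≥ ∑ i, w i * y i`. -/
theorem stmt_3 {n : ℕ} (k : ℕ) (hk : 0 < k) (hkn : k ≤ n)
    (w : Fin n → ℝ) (hw : ∀ i, 0 ≤ w i)
    (y : Fin n → ℝ) (hy : ∀ i, y i ∈ Set.Icc (0:ℝ) 1) (hyk : (∑ i, y i) ≤ (k : ℝ)) :
    ∑ i, w i * y i ≤ concClosure (fwk w k) y := by
  classical
  obtain ⟨α, hα0, hα1, hαm, hαc⟩ :=
    good_of k y (fun i => (hy i).1) (fun i => (hy i).2) hyk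
  have key : ∑ i, w i * y i ≤ ∑ S : Finset (Fin n), α S * fwk w k S := by
    have step1 : ∑ i, w i * y i
        = ∑ S : Finset (Fin n), α S * ∑ i ∈ S, w i := by
      calc ∑ i, w i * y i
          = ∑ i, ∑ S : Finset (Fin n), (if i ∈ S then w i * α S else 0) := by
            refine Finset.sum_congr rfl fun i _ => ?_
            rw [← hαm i, Finset.mul_sum]
            refine Finset.sum_congr rfl fun S _ => ?_
            split_ifs <;> ring
        _ = ∑ S : Finset (Fin n), ∑ i, (if i ∈ S then w i * α S else 0) :=
            Finset.sum_comm
        _ = ∑ S : Finset (Fin n), α S * ∑ i ∈ S, w i := by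
            refine Finset.sum_congr rfl fun S _ => ?_
            rw [Finset.mul_sum, ← Finset.sum_filter]
            rw [show Finset.univ.filter (· ∈ S) = S by ext x; simp]
            refine Finset.sum_congr rfl fun i _ => ?_
            ring
    rw [step1]
    refine Finset.sum_le_sum fun S _ => ?_
    by_cases h : α S = 0
    · simp [h]
    · exact mul_le_mul_of_nonneg_left (fwk_ge w hw k S (hαc S h)) (hα0 S)
  have hmem : (∑ S : Finset (Fin n), α S * fwk w k S) ∈
      {r : ℝ | ∃ α : Finset (Fin n) → ℝ,
        (∀ S, 0 ≤ α S) ∧ (∑ S : Finset (Fin n), α S) = 1 ∧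
        (∀ i, (∑ S : Finset (Fin n), if i ∈ S then α S else 0) = y i) ∧
        r = ∑ S : Finset (Fin n), α S * fwk w k S} := ⟨α, hα0, hα1, hαm, rfl⟩
  have hbdd : BddAbove {r : ℝ | ∃ α : Finset (Fin n) → ℝ,
      (∀ S, 0 ≤ α S) ∧ (∑ S : Finset (Fin n), α S) = 1 ∧
      (∀ i, (∑ S : Finset (Fin n), if i ∈ S then α S else 0) = y i) ∧
      r = ∑ S : Finset (Fin n), α S * fwk w k S} := by
    refine ⟨∑ i, w i, ?_⟩
    rintro r ⟨β, hβ0, hβ1, -, rfl⟩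
    calc ∑ S : Finset (Fin n), β S * fwk w k S
        ≤ ∑ S : Finset (Fin n), β S * ∑ i, w i := by
          refine Finset.sum_le_sum fun S _ => ?_
          exact mul_le_mul_of_nonneg_left (fwk_le w hw k S) (hβ0 S)
      _ = ∑ i, w i := by rw [← Finset.sum_mul, hβ1, one_mul]
  exact key.trans (le_csSup hbdd hmem)
end

section
/- Consider the k-RB planning problem with arms A = {1,…,n}, monotone non-decreasing payoff functions p_i : ℕ → [0,1], where at most k arms may be played per round, and each arm starts with delay 1. Let V* be the optimal value of the LP: maximize Σ_i Σ_τ p_i(τ)·x_{i,τ} subject to Σ_i Σ_τ x_{i,τ} ≤ k, Σ_τ τ·x_{i,τ} ≤ 1 for all i, and x ≥ 0. Then for any feasible schedule of T rounds, the total payoff collected is at most T·V*. In particular T·V* ≥ OPT(T). -/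
/-- The round at which arm `i` was last played strictly before round `t`
(all arms are considered played at round `0`). -/
def lastPlay {n : ℕ} (play : ℕ → Finset (Fin n)) (i : Fin n) (t : ℕ) : ℕ :=
  ((Finset.range t).filter (fun s => s = 0 ∨ i ∈ play s)).sup id

/-- The delay of arm `i` at round `t`: the number of rounds since its last play. -/
def delay {n : ℕ} (play : ℕ → Finset (Fin n)) (i : Fin n) (t : ℕ) : ℕ :=
  t - lastPlay play i t

lemma lastPlay_lt {n : ℕ} (play : ℕ → Finset (Fin n)) (i : Fin n) (t : ℕ) (ht : 0 < t) :
    lastPlay play i t < t := by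
  apply (Finset.sup_lt_iff (by simpa using ht)).2
  intro s hs
  simpa using (Finset.mem_range.1 (Finset.mem_filter.1 hs).1)

lemma le_lastPlay {n : ℕ} (play : ℕ → Finset (Fin n)) (i : Fin n) {t t' : ℕ}
    (h : i ∈ play t) (htt : t < t') : t ≤ lastPlay play i t' := by
  apply Finset.le_sup (f := id)
  exact Finset.mem_filter.2 ⟨Finset.mem_range.2 htt, Or.inr h⟩

/-- LP upper bound for k-RB planning: if `V` is (an upper bound attained by) the optimal
value of the LP `max ∑_{i,τ} p_i(τ) x_{i,τ}` s.t. `∑_{i,τ} x_{i,τ} ≤ k`,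
`∑_τ τ · x_{i,τ} ≤ 1` for all `i`, `x ≥ 0`, then any feasible schedule of `T` rounds
(at most `k` arms per round, all arms starting with delay 1) collects total payoff at
most `T · V`. -/
theorem stmt_6 {n : ℕ} (k T : ℕ) (p : Fin n → ℕ → ℝ)
    (hp : ∀ i τ, p i τ ∈ Set.Icc (0:ℝ) 1) (hpmono : ∀ i, Monotone (p i))
    (V : ℝ)
    (hV : ∀ x : Fin n → ℕ → ℝ, (∀ i τ, 0 ≤ x i τ) →
      (∑ i, ∑ τ ∈ Finset.range (T + 1), x i τ) ≤ (k : ℝ) →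
      (∀ i, (∑ τ ∈ Finset.range (T + 1), (τ : ℝ) * x i τ) ≤ 1) →
      (∑ i, ∑ τ ∈ Finset.range (T + 1), p i τ * x i τ) ≤ V)
    (play : ℕ → Finset (Fin n)) (hcard : ∀ t, (play t).card ≤ k) :
    ∑ t ∈ Finset.Icc 1 T, ∑ i ∈ play t, p i (delay play i t) ≤ (T : ℝ) * V := by
  classical
  have hV0 : 0 ≤ V := by
    have := hV (fun _ _ => 0) (fun _ _ => le_refl 0) (by simp) (by simp)
    simpa using this
  rcases Nat.eq_zero_or_pos T with hT | hT
  · subst hT; simp [hV0]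
  set S : Fin n → Finset ℕ := fun i => (Finset.Icc 1 T).filter (fun t => i ∈ play t) with hS
  set N : Fin n → ℕ → ℕ := fun i τ => ((S i).filter (fun t => delay play i t = τ)).card with hN
  -- delay bound
  have hdle : ∀ i, ∀ t ∈ S i, delay play i t ≤ T := by
    intro i t ht
    have := (Finset.mem_Icc.1 (Finset.mem_filter.1 ht).1).2
    exact le_trans (Nat.sub_le _ _) this
  -- each arm's total delay over its plays is at most T
  have hdelay_sum : ∀ i, ∑ t ∈ S i, delay play i t ≤ T := by
    intro i
    have key : ∀ a ∈ S i, ∀ b ∈ S i, a ≠ b →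
        Disjoint (Finset.Ico (lastPlay play i a) a) (Finset.Ico (lastPlay play i b) b) := by
      have base : ∀ a ∈ S i, ∀ b ∈ S i, a < b →
          Disjoint (Finset.Ico (lastPlay play i a) a) (Finset.Ico (lastPlay play i b) b) := by
        intro a ha b hb hab
        rw [Finset.disjoint_left]
        intro x hx hx'
        have h1 : x < a := (Finset.mem_Ico.1 hx).2
        have h2 : lastPlay play i b ≤ x := (Finset.mem_Ico.1 hx').1
        have h3 : a ≤ lastPlay play i b :=
          le_lastPlay play i (Finset.mem_filter.1 ha).2 hab
        omega
      intro a ha b hb hab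
      rcases lt_or_gt_of_ne hab with h | h
      · exact base a ha b hb h
      · exact (base b hb a ha h).symm
    have hcards : ∀ t ∈ S i, delay play i t = (Finset.Ico (lastPlay play i t) t).card := by
      intro t ht
      simp [delay, Nat.card_Ico]
    calc ∑ t ∈ S i, delay play i t
        = ∑ t ∈ S i, (Finset.Ico (lastPlay play i t) t).card :=
          Finset.sum_congr rfl hcards
      _ = ((S i).biUnion (fun t => Finset.Ico (lastPlay play i t) t)).card :=
          (Finset.card_biUnion key).symm
      _ ≤ (Finset.range T).card := by
          apply Finset.card_le_card
          intro x hx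
          rcases Finset.mem_biUnion.1 hx with ⟨t, ht, hxt⟩
          have hT' : t ≤ T := (Finset.mem_Icc.1 (Finset.mem_filter.1 ht).1).2
          exact Finset.mem_range.2 (lt_of_lt_of_le (Finset.mem_Ico.1 hxt).2 hT')
      _ = T := Finset.card_range T
  -- weighted delay sum via fibers
  have hfiber : ∀ i, ∑ τ ∈ Finset.range (T + 1), ∑ t ∈ (S i).filter (fun t => delay play i t = τ),
      delay play i t = ∑ t ∈ S i, delay play i t := by
    intro i
    apply Finset.sum_fiberwise_of_maps_to
    intro t ht
    exact Finset.mem_range.2 (Nat.lt_succ_of_le (hdle i t ht))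
  have hwsum : ∀ i, ∑ τ ∈ Finset.range (T + 1), τ * N i τ ≤ T := by
    intro i
    have : ∀ τ ∈ Finset.range (T + 1),
        τ * N i τ = ∑ t ∈ (S i).filter (fun t => delay play i t = τ), delay play i t := by
      intro τ _
      rw [Finset.sum_congr rfl (fun t ht => (Finset.mem_filter.1 ht).2)]
      simp [hN, mul_comm]
    rw [Finset.sum_congr rfl this, hfiber i]
    exact hdelay_sum i
  -- total count
  have hNtot : ∀ i, ∑ τ ∈ Finset.range (T + 1), N i τ = (S i).card := by
    intro i
    have h := Finset.sum_fiberwise_of_maps_to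
      (g := fun t => delay play i t) (f := fun _ => (1:ℕ))
      (fun t ht => Finset.mem_range.2 (Nat.lt_succ_of_le (hdle i t ht)))
    calc ∑ τ ∈ Finset.range (T + 1), N i τ
        = ∑ τ ∈ Finset.range (T + 1),
            ∑ _t ∈ (S i).filter (fun t => delay play i t = τ), (1:ℕ) := by
          simp [hN]
      _ = ∑ _t ∈ S i, (1:ℕ) := h
      _ = (S i).card := by simp
  have hcount : ∑ i, (S i).card ≤ k * T := by
    have swap : ∑ i, (S i).card = ∑ t ∈ Finset.Icc 1 T, (play t).card := by
      have : ∀ i, (S i).card = ∑ t ∈ Finset.Icc 1 T, (if i ∈ play t then 1 else 0) := by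
        intro i; simp only [hS]; exact Finset.card_filter _ _
      rw [Finset.sum_congr rfl (fun i _ => this i), Finset.sum_comm]
      apply Finset.sum_congr rfl
      intro t _
      rw [Finset.sum_ite_mem]
      simp
    rw [swap]
    calc ∑ t ∈ Finset.Icc 1 T, (play t).card ≤ ∑ t ∈ Finset.Icc 1 T, k :=
          Finset.sum_le_sum (fun t _ => hcard t)
      _ = T * k := by simp [Nat.card_Icc]
      _ = k * T := Nat.mul_comm T k
  -- payoff rewrite
  have hpay : ∑ t ∈ Finset.Icc 1 T, ∑ i ∈ play t, p i (delay play i t)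
      = ∑ i, ∑ τ ∈ Finset.range (T + 1), p i τ * N i τ := by
    have step1 : ∑ t ∈ Finset.Icc 1 T, ∑ i ∈ play t, p i (delay play i t)
        = ∑ i, ∑ t ∈ S i, p i (delay play i t) := by
      have : ∀ t ∈ Finset.Icc 1 T, ∑ i ∈ play t, p i (delay play i t)
          = ∑ i : Fin n, (if i ∈ play t then p i (delay play i t) else 0) := by
        intro t _
        rw [Finset.sum_ite_mem]
        simp
      rw [Finset.sum_congr rfl this, Finset.sum_comm]
      apply Finset.sum_congr rfl
      intro i _
      simp [hS, Finset.sum_filter]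
    rw [step1]
    apply Finset.sum_congr rfl
    intro i _
    have := Finset.sum_fiberwise_of_maps_to
      (g := fun t => delay play i t) (f := fun t => p i (delay play i t))
      (fun t ht => Finset.mem_range.2 (Nat.lt_succ_of_le (hdle i t ht)))
    rw [← this]
    apply Finset.sum_congr rfl
    intro τ _
    rw [Finset.sum_congr rfl (fun t ht => by rw [(Finset.mem_filter.1 ht).2])]
    simp [hN, mul_comm]
  -- apply LP bound with x = N / T
  have hTpos : (0:ℝ) < T := by exact_mod_cast hT
  set x : Fin n → ℕ → ℝ := fun i τ => (N i τ : ℝ) / T with hx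
  have h1 : ∀ i τ, 0 ≤ x i τ := fun i τ => div_nonneg (Nat.cast_nonneg _) hTpos.le
  have h2 : (∑ i, ∑ τ ∈ Finset.range (T + 1), x i τ) ≤ (k : ℝ) := by
    have e : (∑ i, ∑ τ ∈ Finset.range (T + 1), x i τ)
        = ((∑ i, ∑ τ ∈ Finset.range (T + 1), N i τ : ℕ) : ℝ) / T := by
      push_cast
      simp only [hx, Finset.sum_div]
    rw [e, div_le_iff₀ hTpos]
    have h : (∑ i, ∑ τ ∈ Finset.range (T + 1), N i τ) ≤ k * T := by
      calc (∑ i, ∑ τ ∈ Finset.range (T + 1), N i τ) = ∑ i, (S i).card :=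
            Finset.sum_congr rfl (fun i _ => hNtot i)
        _ ≤ k * T := hcount
    exact_mod_cast h
  have h3 : ∀ i, (∑ τ ∈ Finset.range (T + 1), (τ : ℝ) * x i τ) ≤ 1 := by
    intro i
    have e : (∑ τ ∈ Finset.range (T + 1), (τ : ℝ) * x i τ)
        = ((∑ τ ∈ Finset.range (T + 1), τ * N i τ : ℕ) : ℝ) / T := by
      push_cast
      simp only [hx, Finset.sum_div]
      exact Finset.sum_congr rfl (fun τ _ => by ring)
    rw [e, div_le_one hTpos]
    exact_mod_cast hwsum i
  have hmain := hV x h1 h2 h3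
  have : ∑ t ∈ Finset.Icc 1 T, ∑ i ∈ play t, p i (delay play i t)
      = T * (∑ i, ∑ τ ∈ Finset.range (T + 1), p i τ * x i τ) := by
    rw [hpay, Finset.mul_sum]
    apply Finset.sum_congr rfl
    intro i _
    rw [Finset.mul_sum]
    apply Finset.sum_congr rfl
    intro τ _
    rw [hx]
    field_simp
  rw [this]
  exact mul_le_mul_of_nonneg_left hmain hTpos.le
end

section
/- Let x be an extreme point of the LP: maximize Σ_{i∈A} Σ_τ p_i(τ)·x_{i,τ} subject to Σ_i Σ_τ x_{i,τ} ≤ k, Σ_τ τ·x_{i,τ} ≤ 1 for each i ∈ A, x ≥ 0 (with finitely many variables, τ ranging over [τ^max]). Then x is almost-delay-feasible: for every arm i supported in x (i.e., x_{i,τ} > 0 for some τ), with the possible exception of a single arm ι, there is a unique τ_i with x_{i,τ_i} > 0, and moreover x_{i,τ_i} = 1/τ_i; the exceptional arm ι may have at most two nonzero variables x_{ι,τ_a}, x_{ι,τ_b} with x_{ι,τ_a} < 1/τ_a and x_{ι,τ_b} < 1/τ_b. -/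
open scoped Classical

noncomputable def ind (a τ : ℕ) : ℝ := if τ = a then 1 else 0

lemma sum_ind {s : Finset ℕ} {a : ℕ} (ha : a ∈ s) (g : ℕ → ℝ) :
    ∑ τ ∈ s, g τ * ind a τ = g a := by
  rw [Finset.sum_eq_single a]
  · simp [ind]
  · intro b _ hb; simp [ind, hb]
  · intro h; exact absurd ha h

lemma sum_w2 {s : Finset ℕ} {a b : ℕ} (ha : a ∈ s) (hb : b ∈ s)
    (g : ℕ → ℝ) (w α β : ℝ) :
    ∑ τ ∈ s, g τ * (w * (α * ind a τ + β * ind b τ))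
      = w * (α * g a + β * g b) := by
  have h : ∀ τ ∈ s, g τ * (w * (α * ind a τ + β * ind b τ))
      = (w * α) * (g τ * ind a τ) + (w * β) * (g τ * ind b τ) := by
    intro τ _; ring
  rw [Finset.sum_congr rfl h, Finset.sum_add_distrib, ← Finset.mul_sum, ← Finset.mul_sum,
    sum_ind ha g, sum_ind hb g]
  ring

lemma sum_w3 {s : Finset ℕ} {a b c : ℕ} (ha : a ∈ s) (hb : b ∈ s) (hc : c ∈ s)
    (g : ℕ → ℝ) (w α β γ : ℝ) :
    ∑ τ ∈ s, g τ * (w * (α * ind a τ + β * ind b τ + γ * ind c τ))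
      = w * (α * g a + β * g b + γ * g c) := by
  have h : ∀ τ ∈ s, g τ * (w * (α * ind a τ + β * ind b τ + γ * ind c τ))
      = (w * α) * (g τ * ind a τ) + (w * β) * (g τ * ind b τ) + (w * γ) * (g τ * ind c τ) := by
    intro τ _; ring
  rw [Finset.sum_congr rfl h, Finset.sum_add_distrib, Finset.sum_add_distrib,
    ← Finset.mul_sum, ← Finset.mul_sum, ← Finset.mul_sum,
    sum_ind ha g, sum_ind hb g, sum_ind hc g]
  ring

lemma sum_w2' {s : Finset ℕ} {a b : ℕ} (ha : a ∈ s) (hb : b ∈ s) (w α β : ℝ) :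
    ∑ τ ∈ s, w * (α * ind a τ + β * ind b τ) = w * (α + β) := by
  have h := sum_w2 ha hb (fun _ => (1:ℝ)) w α β
  simpa using h

lemma sum_w3' {s : Finset ℕ} {a b c : ℕ} (ha : a ∈ s) (hb : b ∈ s) (hc : c ∈ s)
    (w α β γ : ℝ) :
    ∑ τ ∈ s, w * (α * ind a τ + β * ind b τ + γ * ind c τ) = w * (α + β + γ) := by
  have h := sum_w3 ha hb hc (fun _ => (1:ℝ)) w α β γ
  simpa using h

lemma abs_comb_le {w α β xa xb xt : ℝ} {a b τ : ℕ} (hw : |w| ≤ 1/2)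
    (hα : |α| ≤ xa) (hβ : |β| ≤ xb) (hxt : 0 ≤ xt)
    (hat : τ = a → xa = xt) (hbt : τ = b → xb = xt) :
    |w * (α * ind a τ + β * ind b τ)| ≤ xt := by
  by_cases h1 : τ = a
  · by_cases h2 : τ = b
    · have exa := hat h1
      have exb := hbt h2
      rw [show ind a τ = 1 from by simp [ind, h1], show ind b τ = 1 from by simp [ind, h2],
        mul_one, mul_one]
      calc |w * (α + β)| = |w| * |α + β| := abs_mul _ _
        _ ≤ (1/2) * (|α| + |β|) :=
            mul_le_mul hw (abs_add_le _ _) (abs_nonneg _) (by norm_num)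
        _ ≤ (1/2) * (xa + xb) := by
            have := abs_nonneg α; have := abs_nonneg β; linarith
        _ ≤ xt := by rw [exa, exb]; linarith
    · have exa := hat h1
      rw [show ind a τ = 1 from by simp [ind, h1], show ind b τ = 0 from by simp [ind, h2],
        mul_one, mul_zero, add_zero]
      calc |w * α| = |w| * |α| := abs_mul _ _
        _ ≤ (1/2) * xa := mul_le_mul hw hα (abs_nonneg _) (by norm_num)
        _ ≤ xt := by rw [exa]; linarith
  · by_cases h2 : τ = b
    · have exb := hbt h2
      rw [show ind a τ = 0 from by simp [ind, h1], show ind b τ = 1 from by simp [ind, h2],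
        mul_one, mul_zero, zero_add]
      calc |w * β| = |w| * |β| := abs_mul _ _
        _ ≤ (1/2) * xb := mul_le_mul hw hβ (abs_nonneg _) (by norm_num)
        _ ≤ xt := by rw [exb]; linarith
    · rw [show ind a τ = 0 from by simp [ind, h1], show ind b τ = 0 from by simp [ind, h2]]
      simpa using hxt

lemma sum_pair_ite {m : Type*} [Fintype m] [DecidableEq m] {i j : m} (hij : i ≠ j) (U V : ℝ) :
    ∑ i' : m, (if i' = i then U else if i' = j then V else 0) = U + V := by
  have h : ∀ i' ∈ Finset.univ, (if i' = i then U else if i' = j then V else 0)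
      = (if i' = i then U else 0) + (if i' = j then V else 0) := by
    intro i' _
    by_cases h1 : i' = i
    · subst h1; rw [if_neg hij]; simp
    · simp [h1]
  rw [Finset.sum_congr rfl h, Finset.sum_add_distrib, Finset.sum_ite_eq', Finset.sum_ite_eq']
  simp

/-- `x` is delay-feasible: every supported arm `i` has a unique nonzero variable
`x i τ`, and this variable equals `1/τ`. -/
def DelayFeasible {n : ℕ} (x : Fin n → ℕ → ℝ) : Prop :=
  ∀ i τ, x i τ ≠ 0 → x i τ = ((τ : ℝ))⁻¹ ∧ ∀ τ', x i τ' ≠ 0 → τ' = τ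

/-- Sparsity pattern of extreme points: any extreme point `x` of the LP
`{x ≥ 0, x supported on delays in [1,τmax], ∑_{i,τ} x_{i,τ} ≤ k, ∑_τ τ·x_{i,τ} ≤ 1 ∀i}`
is almost-delay-feasible: every supported arm, with the possible exception of a single
irregular arm `ι`, has a unique nonzero variable equal to `1/τ`; the irregular arm has
at most two nonzero variables, each strictly below `1/τ`. -/
theorem stmt_8 {n : ℕ} (k τmax : ℕ) (P : Set (Fin n → ℕ → ℝ))
    (hP : P = {x : Fin n → ℕ → ℝ |
      (∀ i τ, 0 ≤ x i τ) ∧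
      (∀ i τ, τ ∉ Finset.Icc 1 τmax → x i τ = 0) ∧
      (∑ i, ∑ τ ∈ Finset.Icc 1 τmax, x i τ) ≤ (k : ℝ) ∧
      (∀ i, (∑ τ ∈ Finset.Icc 1 τmax, (τ : ℝ) * x i τ) ≤ 1)})
    (x : Fin n → ℕ → ℝ) (hx : x ∈ Set.extremePoints ℝ P) :
    DelayFeasible x ∨
      ∃ ι : Fin n,
        (∀ i, i ≠ ι → ∀ τ, x i τ ≠ 0 →
          x i τ = ((τ : ℝ))⁻¹ ∧ ∀ τ', x i τ' ≠ 0 → τ' = τ) ∧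
        ((Finset.Icc 1 τmax).filter (fun τ => x ι τ ≠ 0)).card ≤ 2 ∧
        (∀ τ, x ι τ ≠ 0 → x ι τ < ((τ : ℝ))⁻¹) := by
  classical
  rw [mem_extremePoints] at hx
  obtain ⟨hxP, hxE⟩ := hx
  have hmemP : ∀ y : Fin n → ℕ → ℝ,
      ((∀ i τ, 0 ≤ y i τ) ∧ (∀ i τ, τ ∉ Finset.Icc 1 τmax → y i τ = 0) ∧
        (∑ i, ∑ τ ∈ Finset.Icc 1 τmax, y i τ) ≤ (k : ℝ) ∧
        (∀ i, (∑ τ ∈ Finset.Icc 1 τmax, (τ : ℝ) * y i τ) ≤ 1)) → y ∈ P := by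
    intro y h; rw [hP]; exact h
  rw [hP, Set.mem_setOf_eq] at hxP
  obtain ⟨hpos, hsupp, hglob, harm⟩ := hxP
  -- extreme point ⇒ x is not the midpoint of a nontrivial segment in P
  have hmid : ∀ d : Fin n → ℕ → ℝ, (x + d) ∈ P → (x - d) ∈ P → d = 0 := by
    intro d h1 h2
    have hseg : x ∈ openSegment ℝ (x + d) (x - d) :=
      ⟨1/2, 1/2, by norm_num, by norm_num, by norm_num, by module⟩
    have h3 := (hxE _ h1 _ h2 hseg).1
    funext i τ
    have h4 := congrFun (congrFun h3 i) τ
    simp only [Pi.add_apply] at h4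
    have : d i τ = 0 := by linarith
    simpa using this
  -- sufficient conditions for a perturbation to stay in P
  have hfeas : ∀ d : Fin n → ℕ → ℝ,
      (∀ i τ, |d i τ| ≤ x i τ) →
      (∀ i, (∑ τ ∈ Finset.Icc 1 τmax, (τ : ℝ) * d i τ) = 0 ∨
        |∑ τ ∈ Finset.Icc 1 τmax, (τ : ℝ) * d i τ|
          ≤ 1 - ∑ τ ∈ Finset.Icc 1 τmax, (τ : ℝ) * x i τ) →
      (∑ i, ∑ τ ∈ Finset.Icc 1 τmax, d i τ) = 0 →
      (x + d) ∈ P := by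
    intro d hA hB hC
    apply hmemP
    refine ⟨?_, ?_, ?_, ?_⟩
    · intro i τ
      have h1 := (abs_le.1 (hA i τ)).1
      simp only [Pi.add_apply]
      linarith
    · intro i τ hτ
      have h0 := hsupp i τ hτ
      have h1 := hA i τ
      rw [h0] at h1
      have h2 : d i τ = 0 := abs_nonpos_iff.mp h1
      simp [Pi.add_apply, h0, h2]
    · simp only [Pi.add_apply, Finset.sum_add_distrib]
      rw [hC]
      linarith
    · intro i
      have hs : ∑ τ ∈ Finset.Icc 1 τmax, (τ:ℝ) * (x + d) i τ
          = (∑ τ ∈ Finset.Icc 1 τmax, (τ:ℝ) * x i τ)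
            + ∑ τ ∈ Finset.Icc 1 τmax, (τ:ℝ) * d i τ := by
        rw [← Finset.sum_add_distrib]
        refine Finset.sum_congr rfl fun τ _ => ?_
        simp only [Pi.add_apply]; ring
      rw [hs]
      rcases hB i with h | h
      · rw [h]; simpa using harm i
      · have h2 := le_trans (le_abs_self _) h
        linarith
  -- any admissible perturbation direction is zero
  have hzero : ∀ d : Fin n → ℕ → ℝ,
      (∀ i τ, |d i τ| ≤ x i τ) →
      (∀ i, (∑ τ ∈ Finset.Icc 1 τmax, (τ : ℝ) * d i τ) = 0 ∨
        |∑ τ ∈ Finset.Icc 1 τmax, (τ : ℝ) * d i τ|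
          ≤ 1 - ∑ τ ∈ Finset.Icc 1 τmax, (τ : ℝ) * x i τ) →
      (∑ i, ∑ τ ∈ Finset.Icc 1 τmax, d i τ) = 0 →
      d = 0 := by
    intro d hA hB hC
    refine hmid d (hfeas d hA hB hC) ?_
    have hxd : x - d = x + (-d) := by module
    rw [hxd]
    apply hfeas
    · intro i τ; simpa [abs_neg] using hA i τ
    · intro i
      have hneg : ∑ τ ∈ Finset.Icc 1 τmax, (τ:ℝ) * (-d) i τ
          = -∑ τ ∈ Finset.Icc 1 τmax, (τ:ℝ) * d i τ := by
        simp [mul_neg]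
      rw [hneg]
      rcases hB i with h | h
      · left; rw [h, neg_zero]
      · right; rwa [abs_neg]
    · simp only [Pi.neg_apply, Finset.sum_neg_distrib]
      rw [hC, neg_zero]
  -- basic facts
  have hSmem : ∀ i τ, x i τ ≠ 0 → τ ∈ Finset.Icc 1 τmax := by
    intro i τ h; by_contra hc; exact h (hsupp i τ hc)
  have hτ1 : ∀ τ ∈ Finset.Icc 1 τmax, (1:ℝ) ≤ (τ:ℝ) := by
    intro τ hτ; exact_mod_cast (Finset.mem_Icc.1 hτ).1
  have hτpos : ∀ τ ∈ Finset.Icc 1 τmax, (0:ℝ) < (τ:ℝ) := by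
    intro τ hτ; linarith [hτ1 τ hτ]
  have hterm_nonneg : ∀ (i : Fin n), ∀ τ ∈ Finset.Icc 1 τmax, 0 ≤ (τ:ℝ) * x i τ := by
    intro i τ _; exact mul_nonneg (Nat.cast_nonneg τ) (hpos i τ)
  have hsingle : ∀ (i : Fin n), ∀ τ ∈ Finset.Icc 1 τmax, (τ:ℝ) * x i τ ≤ 1 := by
    intro i τ hτ
    exact le_trans (Finset.single_le_sum (hterm_nonneg i) hτ) (harm i)
  have hle_inv : ∀ i τ, x i τ ≠ 0 → x i τ ≤ (τ:ℝ)⁻¹ := by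
    intro i τ h0
    have hτs := hSmem i τ h0
    have hp := hτpos τ hτs
    rw [inv_eq_one_div, le_div_iff₀ hp, mul_comm]
    exact hsingle i τ hτs
  have hxpos : ∀ i τ, x i τ ≠ 0 → 0 < x i τ := by
    intro i τ h0; exact lt_of_le_of_ne (hpos i τ) (Ne.symm h0)
  have htight : ∀ i τ, x i τ ≠ 0 → x i τ = (τ:ℝ)⁻¹ → ∀ τ', x i τ' ≠ 0 → τ' = τ := by
    intro i τ h0 heq τ' h0'
    by_contra hne
    have hτs := hSmem i τ h0
    have hτ's := hSmem i τ' h0'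
    have hτne : (τ:ℝ) ≠ 0 := ne_of_gt (hτpos τ hτs)
    have h1 : (τ:ℝ) * x i τ = 1 := by
      rw [heq]; field_simp
    have h2 : 0 < (τ':ℝ) * x i τ' := mul_pos (hτpos τ' hτ's) (hxpos i τ' h0')
    have h3 : (τ:ℝ) * x i τ + ∑ τ'' ∈ (Finset.Icc 1 τmax).erase τ, (τ'':ℝ) * x i τ''
        = ∑ τ'' ∈ Finset.Icc 1 τmax, (τ'':ℝ) * x i τ'' :=
      Finset.add_sum_erase (Finset.Icc 1 τmax) (fun τ'' => (τ'':ℝ) * x i τ'') hτs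
    have h4 : (τ':ℝ) * x i τ' ≤ ∑ τ'' ∈ (Finset.Icc 1 τmax).erase τ, (τ'':ℝ) * x i τ'' :=
      Finset.single_le_sum (fun b hb => hterm_nonneg i b (Finset.mem_of_mem_erase hb))
        (Finset.mem_erase.2 ⟨hne, hτ's⟩)
    have h5 := harm i
    linarith
  set Reg : Fin n → Prop :=
    fun i => ∀ τ, x i τ ≠ 0 → x i τ = ((τ:ℝ))⁻¹ ∧ ∀ τ', x i τ' ≠ 0 → τ' = τ with hReg
  have hreg_of_tight : ∀ i τ, x i τ ≠ 0 → x i τ = (τ:ℝ)⁻¹ → Reg i := by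
    intro i τ h0 heq τ0 h00
    have h1 : τ0 = τ := htight i τ h0 heq τ0 h00
    subst h1
    exact ⟨heq, htight i τ0 h0 heq⟩
  have hstrict : ∀ i, ¬ Reg i → ∀ τ, x i τ ≠ 0 → x i τ < (τ:ℝ)⁻¹ := by
    intro i hnr τ h0
    rcases lt_or_eq_of_le (hle_inv i τ h0) with h | h
    · exact h
    · exact absurd (hreg_of_tight i τ h0 h) hnr
  -- extraction of a perturbation direction from an irregular arm
  have hdir : ∀ i, ¬ Reg i → ∃ a b, ∃ α β : ℝ,
      a ∈ Finset.Icc 1 τmax ∧ b ∈ Finset.Icc 1 τmax ∧ |α| ≤ x i a ∧ |β| ≤ x i b ∧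
      ((a:ℝ)*α + (b:ℝ)*β = 0 ∨
        |(a:ℝ)*α + (b:ℝ)*β| ≤ 1 - ∑ τ ∈ Finset.Icc 1 τmax, (τ:ℝ) * x i τ) ∧
      α + β ≠ 0 ∧ α ≠ 0 := by
    intro i hnr
    have hsup : ∃ τ, x i τ ≠ 0 := by
      by_contra hc
      push_neg at hc
      exact hnr (fun τ h0 => absurd (hc τ) h0)
    obtain ⟨τ, h0⟩ := hsup
    by_cases h2 : ∃ τ', x i τ' ≠ 0 ∧ τ' ≠ τ
    · -- two support points
      obtain ⟨τ', h0', hne⟩ := h2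
      have has := hSmem i τ h0
      have hbs := hSmem i τ' h0'
      have hap := hτpos τ has
      have hbp := hτpos τ' hbs
      have hxa := hxpos i τ h0
      have hxb := hxpos i τ' h0'
      set t : ℝ := min (x i τ / τ') (x i τ' / τ) with ht
      have htpos : 0 < t := lt_min (div_pos hxa hbp) (div_pos hxb hap)
      refine ⟨τ, τ', t * τ', -(t * τ), has, hbs, ?_, ?_, ?_, ?_, ?_⟩
      · rw [abs_of_pos (mul_pos htpos hbp)]
        calc t * τ' ≤ (x i τ / τ') * τ' :=
              mul_le_mul_of_nonneg_right (min_le_left _ _) (le_of_lt hbp)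
          _ = x i τ := by field_simp
      · rw [abs_neg, abs_of_pos (mul_pos htpos hap)]
        calc t * τ ≤ (x i τ' / τ) * τ :=
              mul_le_mul_of_nonneg_right (min_le_right _ _) (le_of_lt hap)
          _ = x i τ' := by field_simp
      · left; ring
      · have hcast : (τ:ℝ) ≠ (τ':ℝ) := by
          exact_mod_cast fun h => hne (by exact_mod_cast h.symm)
        intro hc
        apply hcast
        have hz : t * ((τ':ℝ) - τ) = 0 := by linarith
        rcases mul_eq_zero.1 hz with h | h
        · exact absurd h (ne_of_gt htpos)
        · linarith
      · exact ne_of_gt (mul_pos htpos hbp)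
    · -- unique support, slack budget
      push_neg at h2
      have huniq : ∀ τ', x i τ' ≠ 0 → τ' = τ := fun τ' h => h2 τ' h
      have has := hSmem i τ h0
      have hap := hτpos τ has
      have hxa := hxpos i τ h0
      have hsum : ∑ τ' ∈ Finset.Icc 1 τmax, (τ':ℝ) * x i τ' = (τ:ℝ) * x i τ := by
        apply Finset.sum_eq_single
        · intro b _ hbne
          have hb0 : x i b = 0 := by
            by_contra hh; exact hbne (huniq b hh)
          rw [hb0, mul_zero]
        · intro h; exact absurd has h
      have hlt : (τ:ℝ) * x i τ < 1 := by
        have hst := hstrict i hnr τ h0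
        have hτne : (τ:ℝ) ≠ 0 := ne_of_gt hap
        calc (τ:ℝ) * x i τ < (τ:ℝ) * (τ:ℝ)⁻¹ := mul_lt_mul_of_pos_left hst hap
          _ = 1 := by field_simp
      set α : ℝ := min (x i τ) ((1 - (τ:ℝ) * x i τ) / τ) with hα
      have hαpos : 0 < α := lt_min hxa (div_pos (by linarith) hap)
      refine ⟨τ, τ, α, 0, has, has, ?_, ?_, ?_, ?_, ?_⟩
      · rw [abs_of_pos hαpos]; exact min_le_left _ _
      · simpa using hpos i τ
      · right
        rw [hsum, mul_zero, add_zero, abs_of_pos (mul_pos hap hαpos)]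
        have hτne : (τ:ℝ) ≠ 0 := ne_of_gt hap
        calc (τ:ℝ) * α ≤ (τ:ℝ) * ((1 - (τ:ℝ) * x i τ) / τ) :=
              mul_le_mul_of_nonneg_left (min_le_right _ _) (le_of_lt hap)
          _ = 1 - (τ:ℝ) * x i τ := by field_simp
      · rw [add_zero]; exact ne_of_gt hαpos
      · exact ne_of_gt hαpos
  -- at most one irregular arm
  have htwo : ∀ i j : Fin n, i ≠ j → ¬ Reg i → ¬ Reg j → False := by
    intro i j hij hi hj
    obtain ⟨a₁, b₁, α₁, β₁, ha₁, hb₁, hα₁, hβ₁, hB₁, hc₁, hα₁0⟩ := hdir i hi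
    obtain ⟨a₂, b₂, α₂, β₂, ha₂, hb₂, hα₂, hβ₂, hB₂, hc₂, hα₂0⟩ := hdir j hj
    set c₁ : ℝ := α₁ + β₁ with hc₁def
    set c₂ : ℝ := α₂ + β₂ with hc₂def
    set ε : ℝ := (2*(1+|c₁|)*(1+|c₂|))⁻¹ with hε
    have hden : (0:ℝ) < 2*(1+|c₁|)*(1+|c₂|) := by positivity
    have hεpos : 0 < ε := by rw [hε]; positivity
    set s₁ : ℝ := ε * c₂ with hs₁def
    set s₂ : ℝ := -(ε * c₁) with hs₂def
    have hs₁ : |s₁| ≤ 1/2 := by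
      rw [hs₁def, abs_mul, abs_of_pos hεpos, hε, inv_eq_one_div, one_div_mul_eq_div,
        div_le_iff₀ hden]
      nlinarith [abs_nonneg c₁, abs_nonneg c₂]
    have hs₂ : |s₂| ≤ 1/2 := by
      rw [hs₂def, abs_neg, abs_mul, abs_of_pos hεpos, hε, inv_eq_one_div, one_div_mul_eq_div,
        div_le_iff₀ hden]
      nlinarith [abs_nonneg c₁, abs_nonneg c₂]
    set d : Fin n → ℕ → ℝ := fun i' τ =>
      if i' = i then s₁ * (α₁ * ind a₁ τ + β₁ * ind b₁ τ)
      else if i' = j then s₂ * (α₂ * ind a₂ τ + β₂ * ind b₂ τ) else 0 with hd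
    have hdzero : d = 0 := by
      apply hzero
      · intro i' τ
        simp only [hd]
        by_cases h1 : i' = i
        · rw [if_pos h1, h1]
          exact abs_comb_le hs₁ hα₁ hβ₁ (hpos i τ)
            (fun h => by rw [h]) (fun h => by rw [h])
        · rw [if_neg h1]
          by_cases h2 : i' = j
          · rw [if_pos h2, h2]
            exact abs_comb_le hs₂ hα₂ hβ₂ (hpos j τ)
              (fun h => by rw [h]) (fun h => by rw [h])
          · rw [if_neg h2]
            simpa using hpos i' τ
      · intro i'
        simp only [hd]
        by_cases h1 : i' = i
        · simp only [if_pos h1]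
          rw [h1, sum_w2 ha₁ hb₁ (fun τ => (τ:ℝ)) s₁ α₁ β₁]
          rcases hB₁ with h | h
          · left
            rw [show α₁ * ((a₁:ℕ):ℝ) + β₁ * ((b₁:ℕ):ℝ) = (a₁:ℝ)*α₁ + (b₁:ℝ)*β₁ from by ring,
              h, mul_zero]
          · right
            rw [show α₁ * ((a₁:ℕ):ℝ) + β₁ * ((b₁:ℕ):ℝ) = (a₁:ℝ)*α₁ + (b₁:ℝ)*β₁ from by ring,
              abs_mul]
            have hle := mul_le_of_le_one_left (abs_nonneg ((a₁:ℝ)*α₁ + (b₁:ℝ)*β₁))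
              (by linarith : |s₁| ≤ 1)
            linarith
        · simp only [if_neg h1]
          by_cases h2 : i' = j
          · simp only [if_pos h2]
            rw [h2, sum_w2 ha₂ hb₂ (fun τ => (τ:ℝ)) s₂ α₂ β₂]
            rcases hB₂ with h | h
            · left
              rw [show α₂ * ((a₂:ℕ):ℝ) + β₂ * ((b₂:ℕ):ℝ) = (a₂:ℝ)*α₂ + (b₂:ℝ)*β₂ from by ring,
                h, mul_zero]
            · right
              rw [show α₂ * ((a₂:ℕ):ℝ) + β₂ * ((b₂:ℕ):ℝ) = (a₂:ℝ)*α₂ + (b₂:ℝ)*β₂ from by ring,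
                abs_mul]
              have hle := mul_le_of_le_one_left (abs_nonneg ((a₂:ℝ)*α₂ + (b₂:ℝ)*β₂))
                (by linarith : |s₂| ≤ 1)
              linarith
          · simp only [if_neg h2]
            left; simp
      · have hin : ∀ i' : Fin n, ∑ τ ∈ Finset.Icc 1 τmax, d i' τ
            = if i' = i then s₁ * c₁ else if i' = j then s₂ * c₂ else 0 := by
          intro i'
          simp only [hd]
          by_cases h1 : i' = i
          · simp only [if_pos h1]
            rw [sum_w2' ha₁ hb₁ s₁ α₁ β₁, hc₁def]
          · simp only [if_neg h1]
            by_cases h2 : i' = j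
            · simp only [if_pos h2]
              rw [sum_w2' ha₂ hb₂ s₂ α₂ β₂, hc₂def]
            · simp only [if_neg h2]
              simp
        rw [Finset.sum_congr rfl (fun i' _ => hin i'), sum_pair_ite hij]
        rw [hs₁def, hs₂def]; ring
    have heval := congrFun (congrFun hdzero i) a₁
    simp only [hd, if_pos rfl, Pi.zero_apply] at heval
    have hs₁0 : s₁ ≠ 0 := mul_ne_zero (ne_of_gt hεpos) hc₂
    by_cases hab : a₁ = b₁
    · rw [← hab] at heval
      rw [show ind a₁ a₁ = 1 from by simp [ind]] at heval
      have hzz : s₁ * c₁ = 0 := by rw [hc₁def]; linear_combination heval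
      exact (mul_ne_zero hs₁0 hc₁) hzz
    · rw [show ind a₁ a₁ = 1 from by simp [ind],
        show ind b₁ a₁ = 0 from by simp [ind, hab]] at heval
      simp only [mul_one, mul_zero, add_zero] at heval
      exact (mul_ne_zero hs₁0 hα₁0) heval
  -- no arm has three or more support points
  have hthree : ∀ (i : Fin n) (a b c : ℕ),
      x i a ≠ 0 → x i b ≠ 0 → x i c ≠ 0 → a ≠ b → a ≠ c → b ≠ c → False := by
    intro i a b c h0a h0b h0c hab hac hbc
    have has := hSmem i a h0a
    have hbs := hSmem i b h0b
    have hcs := hSmem i c h0c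
    have hxa := hxpos i a h0a
    have hxb := hxpos i b h0b
    have hxc := hxpos i c h0c
    set α : ℝ := (b:ℝ) - (c:ℝ) with hαdef
    set β : ℝ := (c:ℝ) - (a:ℝ) with hβdef
    set γ : ℝ := (a:ℝ) - (b:ℝ) with hγdef
    set m : ℝ := min (min (x i a) (x i b)) (x i c) with hm
    have hmpos : 0 < m := lt_min (lt_min hxa hxb) hxc
    have hma : m ≤ x i a := le_trans (min_le_left _ _) (min_le_left _ _)
    have hmb : m ≤ x i b := le_trans (min_le_left _ _) (min_le_right _ _)
    have hmc : m ≤ x i c := min_le_right _ _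
    set S : ℝ := |α| + |β| + |γ| + 1 with hS
    have hSpos : 0 < S := by positivity
    set ε : ℝ := m / S with hε
    have hεpos : 0 < ε := div_pos hmpos hSpos
    have hbound : ∀ w : ℝ, |w| ≤ S - 1 → ε * |w| ≤ m := by
      intro w hw
      rw [hε, div_mul_eq_mul_div, div_le_iff₀ hSpos]
      nlinarith [abs_nonneg w, hmpos]
    have hbα : ε * |α| ≤ m := hbound α (by
      rw [hS]; linarith [abs_nonneg β, abs_nonneg γ])
    have hbβ : ε * |β| ≤ m := hbound β (by
      rw [hS]; linarith [abs_nonneg α, abs_nonneg γ])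
    have hbγ : ε * |γ| ≤ m := hbound γ (by
      rw [hS]; linarith [abs_nonneg α, abs_nonneg β])
    set d : Fin n → ℕ → ℝ := fun i' τ =>
      if i' = i then ε * (α * ind a τ + β * ind b τ + γ * ind c τ) else 0 with hd
    have hdzero : d = 0 := by
      apply hzero
      · intro i' τ
        simp only [hd]
        by_cases h1 : i' = i
        · rw [if_pos h1, h1]
          by_cases h2 : τ = a
          · rw [show ind a τ = 1 from by simp [ind, h2],
              show ind b τ = 0 from by simp [ind, h2, hab],
              show ind c τ = 0 from by simp [ind, h2, hac]]
            simp only [mul_one, mul_zero, add_zero]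
            rw [abs_mul, abs_of_pos hεpos, h2]
            linarith
          · by_cases h3 : τ = b
            · rw [show ind a τ = 0 from by simp [ind, h2],
                show ind b τ = 1 from by simp [ind, h3],
                show ind c τ = 0 from by simp [ind, h3, hbc]]
              simp only [mul_one, mul_zero, add_zero, zero_add]
              rw [abs_mul, abs_of_pos hεpos, h3]
              linarith
            · by_cases h4 : τ = c
              · rw [show ind a τ = 0 from by simp [ind, h2],
                  show ind b τ = 0 from by simp [ind, h3],
                  show ind c τ = 1 from by simp [ind, h4]]
                simp only [mul_one, mul_zero, add_zero, zero_add]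
                rw [abs_mul, abs_of_pos hεpos, h4]
                linarith
              · rw [show ind a τ = 0 from by simp [ind, h2],
                  show ind b τ = 0 from by simp [ind, h3],
                  show ind c τ = 0 from by simp [ind, h4]]
                simpa using hpos i τ
        · rw [if_neg h1]
          simpa using hpos i' τ
      · intro i'
        simp only [hd]
        by_cases h1 : i' = i
        · simp only [if_pos h1]
          left
          rw [sum_w3 has hbs hcs (fun τ => (τ:ℝ)) ε α β γ, hαdef, hβdef, hγdef]
          ring
        · simp only [if_neg h1]
          left; simp
      · have hin : ∀ i' : Fin n, ∑ τ ∈ Finset.Icc 1 τmax, d i' τ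
            = if i' = i then ε * (α + β + γ) else 0 := by
          intro i'
          simp only [hd]
          by_cases h1 : i' = i
          · simp only [if_pos h1]
            rw [sum_w3' has hbs hcs ε α β γ]
          · simp only [if_neg h1]
            simp
        rw [Finset.sum_congr rfl (fun i' _ => hin i'), Finset.sum_ite_eq']
        simp only [Finset.mem_univ, if_pos]
        rw [hαdef, hβdef, hγdef]
        ring
    have heval := congrFun (congrFun hdzero i) a
    simp only [hd, if_pos rfl, Pi.zero_apply] at heval
    rw [show ind a a = 1 from by simp [ind],
      show ind b a = 0 from by simp [ind, hab],
      show ind c a = 0 from by simp [ind, hac]] at heval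
    simp only [mul_one, mul_zero, add_zero] at heval
    have hα0 : α ≠ 0 := by
      rw [hαdef]
      have : (b:ℝ) ≠ (c:ℝ) := by exact_mod_cast hbc
      intro hcon; apply this; linarith
    exact (mul_ne_zero (ne_of_gt hεpos) hα0) heval
  -- assembly
  by_cases hR : ∀ i0, Reg i0
  · left
    intro i τ
    exact hR i τ
  · push_neg at hR
    obtain ⟨ι, hι⟩ := hR
    right
    refine ⟨ι, ?_, ?_, ?_⟩
    · intro i hne τ h0
      have hri : Reg i := by
        by_contra hc
        exact htwo i ι hne hc hι
      exact hri τ h0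
    · by_contra hc
      push_neg at hc
      obtain ⟨a, b, c, hafm, hbfm, hcfm, hab, hac, hbc⟩ :=
        Finset.two_lt_card_iff.1 hc
      exact hthree ι a b c (Finset.mem_filter.1 hafm).2 (Finset.mem_filter.1 hbfm).2
        (Finset.mem_filter.1 hcfm).2 hab hac hbc
    · exact hstrict ι hι
end
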